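/- Let K be a p-adic field (finite extension of ℚ_p) with uniformizer π, and let n be a positive integer. Let α be a root of the Eisenstein polynomial g(x) = x^{pn} + πx + π. Then L = K[α] is a totally ramified extension of K of degree pn, ord(g'(α)) = ord(π), and there is no uniformizer τ of L with τ^{pn} ∈ K. -/

import Mathlib

open Polynomial

namespace EisNGU

variable {K : Type*} [Field K] {Γ₀ : Type*} [LinearOrderedCommGroupWithZero Γ₀]
variable (v : Valuation K Γ₀)

/-- In a vanishing sum, any term is dominated by another term. -/
lemma exists_other_ge {ι : Type*} {s : Finset ι} {f : ι → K} {i₀ : ι}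
    (hsum : ∑ j ∈ s, f j = 0) (hi₀ : i₀ ∈ s) (hne : v (f i₀) ≠ 0) :
    ∃ j ∈ s, j ≠ i₀ ∧ v (f i₀) ≤ v (f j) := by
  classical
  by_contra hcon
  push_neg at hcon
  have h : v (∑ j ∈ s, f j) = v (f i₀) := by
    refine v.map_sum_eq_of_lt hi₀ (fun j hj => ?_)
    rcases Finset.mem_sdiff.1 hj with ⟨hjs, hj'⟩
    exact hcon j hjs (by simpa using hj')
  rw [hsum, Valuation.map_zero] at h
  exact hne h.symm

lemma map_sum_eq_of_lt' {ι : Type*} {s : Finset ι} {f : ι → K} {j : ι} (hj : j ∈ s)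
    (h0 : v (f j) ≠ 0) (hf : ∀ i ∈ s, i ≠ j → v (f i) < v (f j)) :
    v (∑ i ∈ s, f i) = v (f j) := by
  classical
  refine v.map_sum_eq_of_lt hj (fun i hi => ?_)
  rw [Finset.mem_sdiff, Finset.mem_singleton] at hi
  exact hf i hi.1 hi.2

lemma pow_le_pow_anti {a : Γ₀} (h0 : a ≠ 0) (h1 : a ≤ 1) {s t : ℕ} (hst : s ≤ t) :
    a ^ t ≤ a ^ s := by
  have := zpow_le_zpow_right_of_le_one₀ (G₀ := Γ₀) (zero_lt_iff.2 h0) h1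
    (Int.ofNat_le.2 hst)
  simpa using this

lemma pow_lt_pow_anti {a : Γ₀} (h0 : a ≠ 0) (h1 : a < 1) {s t : ℕ} (hst : s < t) :
    a ^ t < a ^ s := by
  have := zpow_lt_zpow_right_of_lt_one₀ (G₀ := Γ₀) (zero_lt_iff.2 h0) h1
    (by exact_mod_cast hst : (s:ℤ) < t)
  simpa using this


variable {K : Type*} [Field K] {Γ₀ : Type*} [LinearOrderedCommGroupWithZero Γ₀]
variable (p : ℕ) [Fact p.Prime] [Algebra ℚ_[p] K]
variable (v : Valuation K Γ₀)
variable (hpadic : ∀ x : ℚ_[p], v (algebraMap ℚ_[p] K x) ≤ 1 ↔ ‖x‖ ≤ 1)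

lemma hpQ : (p : ℚ_[p]) ≠ 0 := Nat.cast_ne_zero.mpr (Fact.out : p.Prime).ne_zero

lemma pK_eq : ((p : K)) = algebraMap ℚ_[p] K ((p : ℚ_[p])) := by
  rw [map_natCast]

lemma pK_ne_zero : ((p : K)) ≠ 0 := by
  rw [pK_eq p]
  exact fun h => hpQ p ((algebraMap ℚ_[p] K).injective (by simpa using h))

include hpadic in
lemma val_unit_eq_one {u : ℚ_[p]} (hu : ‖u‖ = 1) :
    v (algebraMap ℚ_[p] K u) = 1 := by
  have hu0 : u ≠ 0 := by intro h; rw [h] at hu; simp at hu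
  have h1 : v (algebraMap ℚ_[p] K u) ≤ 1 := (hpadic u).2 hu.le
  have h2 : v (algebraMap ℚ_[p] K u⁻¹) ≤ 1 := (hpadic _).2 (by rw [norm_inv, hu]; norm_num)
  have hmul : v (algebraMap ℚ_[p] K u) * v (algebraMap ℚ_[p] K u⁻¹) = 1 := by
    rw [← Valuation.map_mul, ← map_mul, mul_inv_cancel₀ hu0]; simp
  have : (1:Γ₀) ≤ v (algebraMap ℚ_[p] K u) := by
    calc (1:Γ₀) = v (algebraMap ℚ_[p] K u) * v (algebraMap ℚ_[p] K u⁻¹) := hmul.symm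
    _ ≤ v (algebraMap ℚ_[p] K u) * 1 := mul_le_mul_right h2 _
    _ = v (algebraMap ℚ_[p] K u) := mul_one _
  exact le_antisymm h1 this

include hpadic in
/-- values of `ℚ_p`-elements are powers of `v p`. -/
lemma val_padic_eq_zpow {c : ℚ_[p]} (hc : c ≠ 0) :
    v (algebraMap ℚ_[p] K c) = v ((p : K)) ^ (c.valuation) := by
  set m := c.valuation with hm
  have hpQ0 : (p : ℚ_[p]) ≠ 0 := hpQ p
  set u := c * (p : ℚ_[p]) ^ (-m) with hu
  have hp0R : (p:ℝ) ≠ 0 := by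
    exact_mod_cast (Fact.out : p.Prime).ne_zero
  have hnu : ‖u‖ = 1 := by
    rw [hu, norm_mul, norm_zpow, Padic.norm_p, Padic.norm_eq_zpow_neg_valuation hc,
      inv_zpow, ← zpow_neg, neg_neg, ← zpow_add₀ hp0R, ← hm]
    simp
  have hcu : c = (p : ℚ_[p]) ^ m * u := by
    rw [hu, mul_comm c, ← mul_assoc, ← zpow_add₀ hpQ0]
    simp
  rw [hcu, map_mul, Valuation.map_mul, val_unit_eq_one p v hpadic hnu, mul_one,
    map_zpow₀, map_zpow₀, ← pK_eq]

include hpadic in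
lemma val_p_lt_one : v ((p : K)) < 1 := by
  have h1 : v ((p : K)) ≤ 1 := by
    rw [pK_eq p]
    refine (hpadic _).2 ?_
    rw [Padic.norm_p]
    have hp1 : (1:ℝ) ≤ (p:ℝ) := by exact_mod_cast (Fact.out : p.Prime).one_le
    rw [inv_le_one₀ (by linarith)]
    exact hp1
  rcases lt_or_eq_of_le h1 with h | h
  · exact h
  · exfalso
    have h2 : ¬ v (algebraMap ℚ_[p] K (p : ℚ_[p])⁻¹) ≤ 1 := by
      rw [hpadic]
      rw [norm_inv, Padic.norm_p, inv_inv]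
      push_neg
      exact_mod_cast (Fact.out : p.Prime).one_lt
    apply h2
    rw [map_inv₀, map_inv₀, ← pK_eq p, h]
    norm_num


lemma cross_pow {Γ₀ : Type*} [LinearOrderedCommGroupWithZero Γ₀] {a b : Γ₀}
    (ha : a ≠ 0) (hb : b ≠ 0) {s t : ℕ} {ms mt : ℤ}
    (h : b ^ ms * a ^ (s : ℤ) = b ^ mt * a ^ (t : ℤ)) (hst : t < s) :
    a ^ (((s - t : ℕ) : ℤ)) = b ^ (mt - ms) := by
  have hcast : ((s - t : ℕ) : ℤ) = (s : ℤ) - t := by push_cast; omega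
  rw [hcast, zpow_sub₀ ha, zpow_sub₀ hb,
    div_eq_div_iff (zpow_ne_zero _ ha) (zpow_ne_zero _ hb)]
  rw [mul_comm (a ^ (s:ℤ))]
  exact h

variable [FiniteDimensional ℚ_[p] K]

include hpadic in
lemma exists_val_pow_eq (x : K) (hx : x ≠ 0) :
    ∃ k : ℕ, 0 < k ∧ ∃ m : ℤ, v x ^ (k : ℤ) = v ((p : K)) ^ m := by
  classical
  have hint : IsIntegral ℚ_[p] x := IsIntegral.of_finite ℚ_[p] x
  set P := minpoly ℚ_[p] x with hP
  have hmon : P.Monic := minpoly.monic hint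
  have hdeg : 0 < P.natDegree := minpoly.natDegree_pos hint
  set d := P.natDegree with hd
  set f : ℕ → K := fun i => algebraMap ℚ_[p] K (P.coeff i) * x ^ i with hf
  have hsum : ∑ i ∈ Finset.range (d + 1), f i = 0 := by
    have h0 := minpoly.aeval ℚ_[p] x
    rw [Polynomial.aeval_eq_sum_range] at h0
    simpa [hf, Algebra.smul_def] using h0
  obtain ⟨i₀, hi₀mem, hmax⟩ := Finset.exists_max_image (Finset.range (d + 1))
    (fun i => v (f i)) ⟨d, by simp⟩
  have hvx0 : v x ≠ 0 := (Valuation.ne_zero_iff v).2 hx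
  have hfd : v (f d) ≠ 0 := by
    have he : f d = x ^ d := by simp [hf, hd, hmon.coeff_natDegree]
    rw [he, map_pow]
    exact pow_ne_zero _ hvx0
  have hi₀ : v (f i₀) ≠ 0 := by
    intro h0
    exact hfd (le_zero_iff.1 (h0 ▸ hmax d (by simp)))
  obtain ⟨j, hjmem, hjne, hjge⟩ := exists_other_ge v hsum hi₀mem hi₀
  have heq : v (f j) = v (f i₀) := le_antisymm (hmax j hjmem) hjge
  have hfj : v (f j) ≠ 0 := by rw [heq]; exact hi₀
  have hcj : P.coeff j ≠ 0 := by
    intro h0; apply hfj; simp [hf, h0]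
  have hci : P.coeff i₀ ≠ 0 := by
    intro h0; apply hi₀; simp [hf, h0]
  have hvp0 : v ((p : K)) ≠ 0 := (Valuation.ne_zero_iff v).2 (pK_ne_zero p)
  have hval : ∀ i : ℕ, P.coeff i ≠ 0 →
      v (f i) = v ((p : K)) ^ (P.coeff i).valuation * v x ^ (i : ℤ) := by
    intro i hc
    rw [hf]
    simp only []
    rw [Valuation.map_mul, val_padic_eq_zpow p v hpadic hc, map_pow, zpow_natCast]
  have hkey : v ((p:K)) ^ (P.coeff i₀).valuation * v x ^ ((i₀:ℕ) : ℤ)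
      = v ((p:K)) ^ (P.coeff j).valuation * v x ^ ((j:ℕ) : ℤ) := by
    rw [← hval i₀ hci, ← hval j hcj, heq]
  rcases Nat.lt_or_ge j i₀ with hlt | hge
  · exact ⟨i₀ - j, by omega, (P.coeff j).valuation - (P.coeff i₀).valuation,
      cross_pow hvx0 hvp0 hkey hlt⟩
  · have hlt : i₀ < j := lt_of_le_of_ne hge (Ne.symm (by exact fun h => hjne h))
    exact ⟨j - i₀, by omega, (P.coeff i₀).valuation - (P.coeff j).valuation,
      cross_pow hvx0 hvp0 hkey.symm hlt⟩

include hpadic in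
lemma val_eq_pow_unif (π : K) (hπ1 : v π < 1) (hπ2 : ∀ y : K, v y < 1 → v y ≤ v π)
    (x : K) (hx : x ≠ 0) : ∃ m : ℤ, v x = v π ^ m := by
  have hvp0 : v ((p : K)) ≠ 0 := (Valuation.ne_zero_iff v).2 (pK_ne_zero p)
  have hvp1 : v ((p : K)) < 1 := val_p_lt_one p v hpadic
  have hπ0 : π ≠ 0 := by
    intro h0
    have h1 := hπ2 _ hvp1
    rw [h0, Valuation.map_zero] at h1
    exact hvp0 (le_zero_iff.1 h1)
  have hvπ0 : v π ≠ 0 := (Valuation.ne_zero_iff v).2 hπ0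
  obtain ⟨k, hk, m, hkm⟩ := exists_val_pow_eq p v hpadic π hπ0
  have hm1 : 1 ≤ m := by
    by_contra hcon
    push_neg at hcon
    have h1 : v π ^ (k : ℤ) < 1 :=
      zpow_lt_one₀ (zero_lt_iff.2 hvπ0) hπ1 (by exact_mod_cast hk)
    have h2 : (1 : Γ₀) ≤ v ((p : K)) ^ m := by
      have := zpow_le_zpow_right_of_le_one₀ (zero_lt_iff.2 hvp0) hvp1.le
        (by omega : m ≤ 0)
      simpa using this
    rw [hkm] at h1
    exact absurd h1 (not_lt.2 h2)
  have hsle : v π ^ k ≤ v ((p : K)) := by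
    have h3 : v π ^ (k:ℤ) ≤ v ((p:K)) ^ (1:ℤ) := by
      rw [hkm]
      exact zpow_le_zpow_right_of_le_one₀ (zero_lt_iff.2 hvp0) hvp1.le hm1
    rw [zpow_one] at h3
    rw [← zpow_natCast (v π) k]
    exact h3
  have hbound : ∀ y : K, y ≠ 0 → v y ≤ 1 → ∃ N : ℕ, v π ^ N ≤ v y := by
    intro y hy hy1
    obtain ⟨k', hk', m', hkm'⟩ := exists_val_pow_eq p v hpadic y hy
    have hvy0 : v y ≠ 0 := (Valuation.ne_zero_iff v).2 hy
    have hm'0 : 0 ≤ m' := by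
      by_contra hcon
      push_neg at hcon
      have h2 : (1 : Γ₀) < v ((p : K)) ^ m' :=
        one_lt_zpow_of_neg₀ (zero_lt_iff.2 hvp0) hvp1 hcon
      have h1 : v y ^ (k' : ℤ) ≤ 1 := by
        have := zpow_le_zpow_right_of_le_one₀ (zero_lt_iff.2 hvy0) hy1
          (by exact_mod_cast Nat.zero_le k' : (0:ℤ) ≤ (k':ℤ))
        simpa using this
      rw [hkm'] at h1
      exact absurd (lt_of_lt_of_le h2 h1) (lt_irrefl _)
    refine ⟨k * m'.toNat, ?_⟩
    calc v π ^ (k * m'.toNat) = (v π ^ k) ^ m'.toNat := pow_mul _ _ _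
      _ ≤ v ((p:K)) ^ m'.toNat := pow_le_pow_left' hsle _
      _ = v ((p:K)) ^ m' := by rw [← zpow_natCast, Int.toNat_of_nonneg hm'0]
      _ = v y ^ (k' : ℤ) := hkm'.symm
      _ = v y ^ k' := by rw [zpow_natCast]
      _ ≤ v y ^ 1 := pow_le_pow_anti hvy0 hy1 hk'
      _ = v y := pow_one _
  have hdesc : ∀ N : ℕ, ∀ y : K, y ≠ 0 → v y ≤ 1 → v π ^ N ≤ v y →
      ∃ t : ℕ, v y = v π ^ t := by
    intro N
    induction N with
    | zero =>
      intro y _ hy1 hge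
      exact ⟨0, le_antisymm (by simpa using hy1) (by simpa using hge)⟩
    | succ N ih =>
      intro y hy hy1 hge
      rcases eq_or_lt_of_le hy1 with h1 | h1
      · exact ⟨0, by simpa using h1⟩
      · have hle : v y ≤ v π := hπ2 y h1
        set z := y * π⁻¹ with hz
        have hz0 : z ≠ 0 := mul_ne_zero hy (inv_ne_zero hπ0)
        have hvz : v z = v y * (v π)⁻¹ := by rw [hz, Valuation.map_mul, map_inv₀]
        have hz1 : v z ≤ 1 := by
          rw [hvz]
          calc v y * (v π)⁻¹ ≤ v π * (v π)⁻¹ := mul_le_mul_left hle _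
            _ = 1 := mul_inv_cancel₀ hvπ0
        have hzge : v π ^ N ≤ v z := by
          rw [hvz]
          calc v π ^ N = v π ^ (N + 1) * (v π)⁻¹ := by
                rw [pow_succ, mul_assoc, mul_inv_cancel₀ hvπ0, mul_one]
            _ ≤ v y * (v π)⁻¹ := mul_le_mul_left hge _
        obtain ⟨t, ht⟩ := ih z hz0 hz1 hzge
        refine ⟨t + 1, ?_⟩
        have hyz : v y = v z * v π := by
          rw [hvz, mul_assoc, inv_mul_cancel₀ hvπ0, mul_one]
        rw [hyz, ht, pow_succ]
  rcases le_or_gt (v x) 1 with h | h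
  · obtain ⟨N, hN⟩ := hbound x hx h
    obtain ⟨t, ht⟩ := hdesc N x hx h hN
    exact ⟨t, by rw [ht, zpow_natCast]⟩
  · have hx' : x⁻¹ ≠ 0 := inv_ne_zero hx
    have h1 : v x⁻¹ ≤ 1 := by
      rw [map_inv₀]
      exact (inv_lt_one_iff₀.2 (Or.inr h)).le
    obtain ⟨N, hN⟩ := hbound x⁻¹ hx' h1
    obtain ⟨t, ht⟩ := hdesc N x⁻¹ hx' h1 hN
    refine ⟨-(t : ℤ), ?_⟩
    rw [map_inv₀] at ht
    rw [← inv_inv (v x), ht, ← zpow_natCast (v π) t, ← zpow_neg]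

section Poly

open Polynomial

variable {L : Type*} [Field L] [Algebra K L]

lemma int_one' : ∀ i, v ((1 : K[X]).coeff i) ≤ 1 := by
  intro i; rw [Polynomial.coeff_one]; split_ifs <;> simp

lemma int_mul {P Q : K[X]} (hP : ∀ i, v (P.coeff i) ≤ 1) (hQ : ∀ i, v (Q.coeff i) ≤ 1) :
    ∀ i, v ((P * Q).coeff i) ≤ 1 := by
  intro i
  rw [Polynomial.coeff_mul]
  refine v.map_sum_le fun x _ => ?_
  rw [Valuation.map_mul]
  exact mul_le_one' (hP _) (hQ _)

lemma int_pow {P : K[X]} (hP : ∀ i, v (P.coeff i) ≤ 1) (t : ℕ) :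
    ∀ i, v ((P ^ t).coeff i) ≤ 1 := by
  induction t with
  | zero => simpa using int_one' v
  | succ t ih => rw [pow_succ]; exact int_mul v ih hP

lemma int_C {a : K} (ha : v a ≤ 1) : ∀ i, v ((Polynomial.C a).coeff i) ≤ 1 := by
  intro i; rw [Polynomial.coeff_C]; split_ifs <;> simpa using ha

lemma int_X : ∀ i, v ((Polynomial.X : K[X]).coeff i) ≤ 1 := by
  intro i; rw [Polynomial.coeff_X]; split_ifs <;> simp

lemma int_comp {P Q : K[X]} (hP : ∀ i, v (P.coeff i) ≤ 1) (hQ : ∀ i, v (Q.coeff i) ≤ 1) :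
    ∀ i, v ((P.comp Q).coeff i) ≤ 1 := by
  rw [Polynomial.comp_eq_sum_left, Polynomial.sum]
  intro i
  rw [Polynomial.finset_sum_coeff]
  refine v.map_sum_le fun j _ => ?_
  exact int_mul v (int_C v (hP j)) (int_pow v hQ j) i

lemma int_sub {P Q : K[X]} (hP : ∀ i, v (P.coeff i) ≤ 1) (hQ : ∀ i, v (Q.coeff i) ≤ 1) :
    ∀ i, v ((P - Q).coeff i) ≤ 1 := by
  intro i
  rw [Polynomial.coeff_sub]
  exact le_trans (v.map_sub _ _) (max_le (hP i) (hQ i))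

lemma int_deriv (hnat : ∀ m : ℕ, v ((m : K)) ≤ 1) {P : K[X]}
    (hP : ∀ i, v (P.coeff i) ≤ 1) :
    ∀ i, v ((Polynomial.derivative P).coeff i) ≤ 1 := by
  intro i
  rw [Polynomial.coeff_derivative, Valuation.map_mul]
  have hcast : ((i : K) + 1) = ((i + 1 : ℕ) : K) := by push_cast; ring
  rw [hcast]
  exact mul_le_one' (hP _) (hnat _)

lemma int_aeval (vL : Valuation L Γ₀) (hcomp : ∀ x : K, vL (algebraMap K L x) = v x)
    {P : K[X]} (hP : ∀ i, v (P.coeff i) ≤ 1) {z : L} (hz : vL z ≤ 1) :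
    vL (Polynomial.aeval z P) ≤ 1 := by
  rw [Polynomial.aeval_eq_sum_range]
  refine vL.map_sum_le fun i _ => ?_
  rw [Algebra.smul_def, Valuation.map_mul, hcomp, map_pow]
  exact mul_le_one' (hP i) (pow_le_one' hz i)

lemma exists_int_quot (N : ℕ) (hN : N ≠ 0)
    (τ : L) (hind : LinearIndependent K fun i : Fin N => τ ^ (i : ℕ))
    (c : K) (hc : algebraMap K L c = τ ^ N) (hcint : v c ≤ 1)
    (Q : K[X]) (hQint : ∀ i, v (Q.coeff i) ≤ 1) (hQτ : Polynomial.aeval τ Q = 0) :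
    ∃ q : K[X], (∀ i, v (q.coeff i) ≤ 1) ∧
      Q = (Polynomial.X ^ N - Polynomial.C c) * q := by
  classical
  set h : K[X] := Polynomial.X ^ N - Polynomial.C c with hh
  have hmon : h.Monic := Polynomial.monic_X_pow_sub_C c hN
  have hhτ : Polynomial.aeval τ h = 0 := by
    rw [hh, map_sub, Polynomial.aeval_C, hc, map_pow, Polynomial.aeval_X, sub_self]
  have hdeg : h.degree = N := Polynomial.degree_X_pow_sub_C (Nat.pos_of_ne_zero hN) c
  have hr : Q %ₘ h = 0 := by
    set r := Q %ₘ h with hrdef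
    have hrτ : Polynomial.aeval τ r = 0 := by
      have hQ2 := Polynomial.modByMonic_add_div Q h
      have h3 := congrArg (Polynomial.aeval τ) hQ2
      rw [map_add, map_mul, hhτ, zero_mul, add_zero] at h3
      show Polynomial.aeval τ (Q %ₘ h) = 0
      rw [h3, hQτ]
    by_contra hr0
    have hdr : r.degree < (N : WithBot ℕ) := by
      rw [← hdeg]; exact Polynomial.degree_modByMonic_lt Q hmon
    have hnr : r.natDegree < N := (Polynomial.natDegree_lt_iff_degree_lt hr0).2 hdr
    have hcoeffs : ∀ i : Fin N, r.coeff (i : ℕ) = 0 := by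
      have hsum : ∑ i : Fin N, r.coeff (i : ℕ) • τ ^ (i : ℕ) = 0 := by
        rw [Fin.sum_univ_eq_sum_range (fun i => r.coeff i • τ ^ i) N,
          ← Polynomial.aeval_eq_sum_range' hnr, hrτ]
      exact Fintype.linearIndependent_iff.1 hind _ hsum
    apply hr0
    ext i
    rcases lt_or_ge i N with h1 | h1
    · simpa using hcoeffs ⟨i, h1⟩
    · simp [Polynomial.coeff_eq_zero_of_degree_lt
        (lt_of_lt_of_le hdr (by exact_mod_cast h1))]
  refine ⟨Q /ₘ h, ?_, ?_⟩
  · set R := v.integer with hR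
    have hQc : ↑Q.coeffs ⊆ (R : Set K) := by
      intro a ha
      rw [Finset.mem_coe, Polynomial.mem_coeffs_iff] at ha
      obtain ⟨n, _, rfl⟩ := ha
      exact hQint n
    have hhc : ↑h.coeffs ⊆ (R : Set K) := by
      intro a ha
      rw [Finset.mem_coe, Polynomial.mem_coeffs_iff] at ha
      obtain ⟨n, _, rfl⟩ := ha
      exact int_sub v (int_pow v (int_X v) N) (int_C v hcint) n
    have hmon₀ : (h.toSubring R hhc).Monic := (Polynomial.monic_toSubring _ _ _).2 hmon
    have hdiv : ((Q.toSubring R hQc) /ₘ (h.toSubring R hhc)).map (Subring.subtype R)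
        = Q /ₘ h := by
      rw [Polynomial.map_divByMonic _ hmon₀, Polynomial.map_toSubring,
        Polynomial.map_toSubring]
    intro i
    rw [← hdiv, Polynomial.coeff_map]
    exact (((Q.toSubring R hQc) /ₘ (h.toSubring R hhc)).coeff i).2
  · conv_lhs => rw [← Polynomial.modByMonic_add_div Q h]
    rw [hr, zero_add]

lemma no_tau (vL : Valuation L Γ₀) (hcomp : ∀ x : K, vL (algebraMap K L x) = v x)
    (hnat : ∀ m : ℕ, v ((m : K)) ≤ 1)
    (N : ℕ) (hN : 2 ≤ N) (δ : Γ₀) (hδ0 : δ ≠ 0) (hδ1 : δ < 1)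
    (τ : L) (hτδ : vL τ = δ)
    (c : K) (hc : algebraMap K L c = τ ^ N) (hcint : v c ≤ 1)
    (hind : LinearIndependent K fun i : Fin N => τ ^ (i : ℕ))
    (α : L) (g f e : K[X])
    (hgint : ∀ i, v (g.coeff i) ≤ 1) (hfint : ∀ i, v (f.coeff i) ≤ 1)
    (heint : ∀ i, v (e.coeff i) ≤ 1)
    (hfτ : Polynomial.aeval τ f = α)
    (hgα : Polynomial.aeval α g = 0)
    (heα : Polynomial.aeval α e = τ)
    (hg' : vL (Polynomial.aeval α (Polynomial.derivative g)) = δ ^ N)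
    (hNv : vL ((N : L)) ≤ δ ^ N) : False := by
  classical
  have hτ1 : vL τ ≤ 1 := by rw [hτδ]; exact hδ1.le
  have hα1 : vL α ≤ 1 := by
    rw [← hfτ]; exact int_aeval v vL hcomp hfint hτ1
  have hN0 : N ≠ 0 := by omega
  set h : K[X] := Polynomial.X ^ N - Polynomial.C c with hh
  have hhτ : Polynomial.aeval τ h = 0 := by
    rw [hh, map_sub, Polynomial.aeval_C, hc, map_pow, Polynomial.aeval_X, sub_self]
  have hder_h : Polynomial.derivative h
      = Polynomial.C ((N : K)) * Polynomial.X ^ (N - 1) := by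
    rw [hh, Polynomial.derivative_sub, Polynomial.derivative_C, sub_zero,
      Polynomial.derivative_X_pow]
  have hh'τ : vL (Polynomial.aeval τ (Polynomial.derivative h)) ≤ δ ^ (2 * N - 1) := by
    rw [hder_h, map_mul, Polynomial.aeval_C, map_pow, Polynomial.aeval_X,
      Valuation.map_mul, map_pow, hτδ, map_natCast]
    calc vL ((N : L)) * δ ^ (N - 1) ≤ δ ^ N * δ ^ (N - 1) := mul_le_mul_left hNv _
      _ = δ ^ (2 * N - 1) := by rw [← pow_add]; congr 1; omega
  obtain ⟨q, hqint, hq⟩ := exists_int_quot v N hN0 τ hind c hc hcint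
    (g.comp f) (int_comp v hgint hfint)
    (by rw [Polynomial.aeval_comp, hfτ, hgα])
  have e1 : Polynomial.aeval τ (Polynomial.derivative (g.comp f))
      = Polynomial.aeval τ (Polynomial.derivative f)
        * Polynomial.aeval α (Polynomial.derivative g) := by
    rw [Polynomial.derivative_comp, map_mul, Polynomial.aeval_comp, hfτ]
  have e2 : Polynomial.aeval τ (Polynomial.derivative (h * q))
      = Polynomial.aeval τ (Polynomial.derivative h) * Polynomial.aeval τ q := by
    rw [Polynomial.derivative_mul, map_add, map_mul, map_mul, hhτ, zero_mul, add_zero]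
  have hev : Polynomial.aeval τ (Polynomial.derivative f)
      * Polynomial.aeval α (Polynomial.derivative g)
      = Polynomial.aeval τ (Polynomial.derivative h) * Polynomial.aeval τ q := by
    rw [← e1, ← e2, hq]
  have hA : vL (Polynomial.aeval τ (Polynomial.derivative f)) ≤ δ ^ (N - 1) := by
    have h1 : vL (Polynomial.aeval τ (Polynomial.derivative f)) * δ ^ N
        = vL (Polynomial.aeval τ (Polynomial.derivative h)) * vL (Polynomial.aeval τ q) := by
      have h2 := congrArg vL hev
      rw [Valuation.map_mul, Valuation.map_mul, hg'] at h2
      exact h2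
    have h3 : vL (Polynomial.aeval τ (Polynomial.derivative f)) * δ ^ N
        ≤ δ ^ (N - 1) * δ ^ N := by
      rw [h1]
      calc vL (Polynomial.aeval τ (Polynomial.derivative h)) * vL (Polynomial.aeval τ q)
          ≤ δ ^ (2 * N - 1) * 1 := mul_le_mul' hh'τ (int_aeval v vL hcomp hqint hτ1)
        _ = δ ^ (N - 1) * δ ^ N := by rw [mul_one, ← pow_add]; congr 1; omega
    exact le_of_mul_le_mul_right h3 (zero_lt_iff.2 (pow_ne_zero _ hδ0))
  set E : K[X] := e.comp f - Polynomial.X with hE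
  have hEτ : Polynomial.aeval τ E = 0 := by
    rw [hE, map_sub, Polynomial.aeval_comp, hfτ, heα, Polynomial.aeval_X, sub_self]
  obtain ⟨r, hrint, hrq⟩ := exists_int_quot v N hN0 τ hind c hc hcint
    E (int_sub v (int_comp v heint hfint) (int_X v)) hEτ
  have e3 : Polynomial.aeval τ (Polynomial.derivative E)
      = Polynomial.aeval τ (Polynomial.derivative f)
        * Polynomial.aeval α (Polynomial.derivative e) - 1 := by
    rw [hE, Polynomial.derivative_sub, Polynomial.derivative_X, map_sub,
      Polynomial.derivative_comp, map_mul, Polynomial.aeval_comp, hfτ, map_one]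
  have e4 : Polynomial.aeval τ (Polynomial.derivative E)
      = Polynomial.aeval τ (Polynomial.derivative h) * Polynomial.aeval τ r := by
    rw [hrq, Polynomial.derivative_mul, map_add, map_mul, map_mul, hhτ, zero_mul, add_zero]
  have hsmall : vL (Polynomial.aeval τ (Polynomial.derivative f)
      * Polynomial.aeval α (Polynomial.derivative e)) < 1 := by
    rw [Valuation.map_mul]
    calc vL (Polynomial.aeval τ (Polynomial.derivative f))
        * vL (Polynomial.aeval α (Polynomial.derivative e))
        ≤ δ ^ (N - 1) * 1 := mul_le_mul' hA (int_aeval v vL hcomp (int_deriv v hnat heint) hα1)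
      _ = δ ^ (N - 1) := mul_one _
      _ < 1 := by
          have h4 := pow_lt_pow_anti hδ0 hδ1 (show 0 < N - 1 by omega)
          simpa using h4
  have hone : vL (Polynomial.aeval τ (Polynomial.derivative f)
      * Polynomial.aeval α (Polynomial.derivative e) - 1) = 1 := by
    have h5 : vL (Polynomial.aeval τ (Polynomial.derivative f)
        * Polynomial.aeval α (Polynomial.derivative e)) < vL 1 := by
      rw [Valuation.map_one]; exact hsmall
    have h6 := Valuation.map_sub_eq_of_lt_right vL h5
    rw [Valuation.map_one] at h6
    exact h6
  have hfinal : (1 : Γ₀) ≤ δ ^ (2 * N - 1) := by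
    rw [← hone, ← e3, e4, Valuation.map_mul]
    calc vL (Polynomial.aeval τ (Polynomial.derivative h)) * vL (Polynomial.aeval τ r)
        ≤ δ ^ (2 * N - 1) * 1 := mul_le_mul' hh'τ (int_aeval v vL hcomp hrint hτ1)
      _ = δ ^ (2 * N - 1) := mul_one _
  have hlast : δ ^ (2 * N - 1) < 1 := by
    have h7 := pow_lt_pow_anti hδ0 hδ1 (show 0 < 2 * N - 1 by omega)
    simpa using h7
  exact absurd hfinal (not_le.2 hlast)

end Poly

open Polynomial in
theorem main
    {K L : Type*} [Field K] [Field L] {Γ₀ : Type*} [LinearOrderedCommGroupWithZero Γ₀]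
    (p : ℕ) [Fact p.Prime] [Algebra ℚ_[p] K] [FiniteDimensional ℚ_[p] K]
    [Algebra K L]
    (vK : Valuation K Γ₀) (vL : Valuation L Γ₀)
    (hcomp : ∀ x : K, vL (algebraMap K L x) = vK x)
    (hpadic : ∀ x : ℚ_[p], vK (algebraMap ℚ_[p] K x) ≤ 1 ↔ ‖x‖ ≤ 1)
    (π : K) (hπ : vK π < 1 ∧ ∀ x : K, vK x < 1 → vK x ≤ vK π)
    (n : ℕ) (hn : 0 < n)
    (α : L) (hroot : α ^ (p * n) + algebraMap K L π * α + algebraMap K L π = 0)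
    (hgen : Algebra.adjoin K {α} = ⊤) :
    (Module.finrank K L = p * n) ∧
    ((vL α < 1 ∧ ∀ z : L, vL z < 1 → vL z ≤ vL α) ∧
      vL (algebraMap K L π) = (vL α) ^ (p * n)) ∧
    (vL ((p * n : ℕ) * α ^ (p * n - 1) + algebraMap K L π) = vL (algebraMap K L π)) ∧
    (¬ ∃ τ : L, (vL τ < 1 ∧ ∀ z : L, vL z < 1 → vL z ≤ vL τ) ∧
        τ ^ (p * n) ∈ Set.range (algebraMap K L)) := by
  have hppr : p.Prime := Fact.out
  set PN := p * n with hPN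
  have hPN2 : 2 ≤ PN := by
    calc 2 ≤ p := hppr.two_le
      _ = p * 1 := (mul_one p).symm
      _ ≤ p * n := Nat.mul_le_mul_left p hn
  have hPN0 : PN ≠ 0 := by omega
  -- basic K facts
  have hnat : ∀ m : ℕ, vK ((m : K)) ≤ 1 := by
    intro m
    rw [show ((m : K)) = algebraMap ℚ_[p] K ((m : ℚ_[p])) from (map_natCast _ m).symm]
    exact (hpadic _).2 (by exact_mod_cast Padic.norm_int_le_one (m : ℤ))
  have hvp0 : vK ((p : K)) ≠ 0 := (Valuation.ne_zero_iff vK).2 (pK_ne_zero p)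
  have hvp1 : vK ((p : K)) < 1 := val_p_lt_one p vK hpadic
  have hπ0 : π ≠ 0 := by
    intro h0
    have h1 := hπ.2 _ hvp1
    rw [h0, Valuation.map_zero] at h1
    exact hvp0 (le_zero_iff.1 h1)
  have hvπ0 : vK π ≠ 0 := (Valuation.ne_zero_iff vK).2 hπ0
  have hval := val_eq_pow_unif p vK hpadic π hπ.1 hπ.2
  -- L-side basics
  have hmπ : vL (algebraMap K L π) = vK π := hcomp π
  have hα0 : α ≠ 0 := by
    intro h0
    rw [h0] at hroot
    have h1 : algebraMap K L π = 0 := by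
      simpa [zero_pow hPN0] using hroot
    exact hπ0 (by simpa using (_root_.map_eq_zero (algebraMap K L)).1 h1)
  set δ := vL α with hδ
  have hδ0 : δ ≠ 0 := (Valuation.ne_zero_iff vL).2 hα0
  have hroot' : α ^ PN = -(algebraMap K L π * α + algebraMap K L π) := by
    rw [eq_neg_iff_add_eq_zero, ← add_assoc]
    exact hroot
  have hδ1 : δ < 1 := by
    by_contra hcon
    push_neg at hcon
    have h1 : vL (algebraMap K L π * α + algebraMap K L π) ≤ vK π * δ := by
      refine le_trans (vL.map_add _ _) (max_le ?_ ?_)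
      · rw [Valuation.map_mul, hmπ]
      · rw [hmπ]; exact le_mul_of_one_le_right' hcon
    have h3 : δ ^ PN < δ := by
      calc δ ^ PN = vL (α ^ PN) := (map_pow vL α PN).symm
        _ = vL (-(algebraMap K L π * α + algebraMap K L π)) := by rw [hroot']
        _ = vL (algebraMap K L π * α + algebraMap K L π) := Valuation.map_neg vL _
        _ ≤ vK π * δ := h1
        _ < 1 * δ := by
            rw [mul_comm (vK π) δ, mul_comm 1 δ]
            exact mul_lt_mul_of_pos_left hπ.1 (zero_lt_iff.2 hδ0)
        _ = δ := one_mul δ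
    have h4 : δ ≤ δ ^ PN := le_self_pow₀ hcon hPN0
    exact absurd h3 (not_lt.2 h4)
  have hδπ : δ ^ PN = vK π := by
    have h1 : vL (algebraMap K L π * α) < vL (algebraMap K L π) := by
      rw [Valuation.map_mul, hmπ]
      calc vK π * δ < vK π * 1 := mul_lt_mul_of_pos_left hδ1 (zero_lt_iff.2 hvπ0)
        _ = vK π := mul_one _
    calc δ ^ PN = vL (α ^ PN) := (map_pow vL α PN).symm
      _ = vL (-(algebraMap K L π * α + algebraMap K L π)) := by rw [hroot']
      _ = vL (algebraMap K L π * α + algebraMap K L π) := Valuation.map_neg vL _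
      _ = vL (algebraMap K L π) := Valuation.map_add_eq_of_lt_right vL h1
      _ = vK π := hmπ
  -- exponent machinery
  have hδne1 : δ ≠ 1 := ne_of_lt hδ1
  have hzinj : ∀ a b : ℤ, δ ^ a = δ ^ b → a = b := fun a b h =>
    zpow_right_injective₀ (zero_lt_iff.2 hδ0) hδne1 h
  have hπz : ∀ m : ℤ, (vK π) ^ m = δ ^ ((PN : ℤ) * m) := by
    intro m
    rw [← hδπ, ← zpow_natCast δ PN, ← zpow_mul]
  have hterm : ∀ w : L, vL w = δ → ∀ b : K, b ≠ 0 → ∀ i : ℕ, ∃ m : ℤ,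
      vK b = vK π ^ m ∧
      vL (algebraMap K L b * w ^ i) = δ ^ ((PN : ℤ) * m + i) := by
    intro w hw b hb i
    obtain ⟨m, hm⟩ := hval b hb
    refine ⟨m, hm, ?_⟩
    rw [Valuation.map_mul, hcomp, map_pow, hw, hm, hπz, ← zpow_natCast δ i,
      ← zpow_add₀ hδ0]
  have hdiffe : ∀ (i j : Fin PN) (mi mj : ℤ),
      (PN : ℤ) * mi + ((i : ℕ) : ℤ) = (PN : ℤ) * mj + ((j : ℕ) : ℤ) → i = j := by
    intro i j mi mj hij
    have h5 : ((i : ℕ) : ℤ) - ((j : ℕ) : ℤ) = (PN : ℤ) * (mj - mi) := by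
      linear_combination hij
    have hdvd : (PN : ℤ) ∣ ((i : ℕ) : ℤ) - ((j : ℕ) : ℤ) := ⟨mj - mi, h5⟩
    have hi2 : (i : ℕ) < PN := i.2
    have hj2 : (j : ℕ) < PN := j.2
    have hzero := Int.eq_zero_of_dvd_of_natAbs_lt_natAbs hdvd (by omega)
    exact Fin.ext (by omega)
  -- sum value formula
  have hsumval : ∀ w : L, vL w = δ → ∀ a : Fin PN → K, (∃ i, a i ≠ 0) →
      ∃ i₀ : Fin PN, a i₀ ≠ 0 ∧
        vL (algebraMap K L (a i₀) * w ^ ((i₀ : ℕ))) ≠ 0 ∧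
        vL (∑ i, algebraMap K L (a i) * w ^ ((i : ℕ)))
          = vL (algebraMap K L (a i₀) * w ^ ((i₀ : ℕ))) ∧
        ∀ i, vL (algebraMap K L (a i) * w ^ ((i : ℕ)))
          ≤ vL (algebraMap K L (a i₀) * w ^ ((i₀ : ℕ))) := by
    intro w hw a hex
    obtain ⟨i₁, hi₁⟩ := hex
    have hw0 : w ≠ 0 := by
      intro h0
      rw [h0, Valuation.map_zero] at hw
      exact hδ0 hw.symm
    obtain ⟨i₀, -, hmax⟩ := Finset.exists_max_image Finset.univ
      (fun i : Fin PN => vL (algebraMap K L (a i) * w ^ ((i : ℕ)))) ⟨i₁, Finset.mem_univ _⟩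
    have hTi₁ : vL (algebraMap K L (a i₁) * w ^ ((i₁ : ℕ))) ≠ 0 := by
      rw [Valuation.map_mul, hcomp, map_pow]
      exact mul_ne_zero ((Valuation.ne_zero_iff vK).2 hi₁)
        (pow_ne_zero _ ((Valuation.ne_zero_iff vL).2 hw0))
    have hTi₀ : vL (algebraMap K L (a i₀) * w ^ ((i₀ : ℕ))) ≠ 0 := fun h0 =>
      hTi₁ (le_zero_iff.1 (h0 ▸ hmax i₁ (Finset.mem_univ _)))
    have ha₀ : a i₀ ≠ 0 := by
      intro h0
      apply hTi₀
      rw [h0]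
      simp
    refine ⟨i₀, ha₀, hTi₀, ?_, fun i => hmax i (Finset.mem_univ _)⟩
    refine map_sum_eq_of_lt' vL (Finset.mem_univ i₀) hTi₀ (fun j _ hjne => ?_)
    rcases eq_or_ne (a j) 0 with h0 | h0
    · rw [h0]
      simpa using zero_lt_iff.2 hTi₀
    · refine lt_of_le_of_ne (hmax j (Finset.mem_univ _)) (fun heq => hjne ?_)
      obtain ⟨mj, -, hmj⟩ := hterm w hw (a j) h0 (j : ℕ)
      obtain ⟨mi, -, hmi⟩ := hterm w hw (a i₀) ha₀ (i₀ : ℕ)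
      exact hdiffe j i₀ mj mi (hzinj _ _ (by rw [← hmj, ← hmi, heq]))
  -- linear independence of powers of any uniformizer
  have hli : ∀ w : L, vL w = δ → LinearIndependent K (fun i : Fin PN => w ^ ((i : ℕ))) := by
    intro w hw
    rw [Fintype.linearIndependent_iff]
    intro a hsum0
    by_contra hcon
    push_neg at hcon
    obtain ⟨i₁, hi₁⟩ := hcon
    obtain ⟨i₀, -, hT0, hveq, -⟩ := hsumval w hw a ⟨i₁, hi₁⟩
    have hsum0' : ∑ i, algebraMap K L (a i) * w ^ ((i : ℕ)) = 0 := by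
      rw [← hsum0]
      exact Finset.sum_congr rfl fun i _ => (Algebra.smul_def _ _).symm
    rw [hsum0', Valuation.map_zero] at hveq
    exact hT0 hveq.symm
  -- the Eisenstein polynomial
  set gp : K[X] := X ^ PN + (C π * X + C π) with hgp
  have hlin : (C π * X + C π).degree < ((PN : ℕ) : WithBot ℕ) := by
    refine lt_of_le_of_lt degree_linear_le ?_
    exact_mod_cast hPN2
  have hgmon : gp.Monic := monic_X_pow_add hlin
  have hdgp : gp.degree = PN := by
    rw [hgp, degree_add_eq_left_of_degree_lt (by rwa [degree_X_pow]), degree_X_pow]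
  have hgproot : Polynomial.aeval α gp = 0 := by
    have h1 : Polynomial.aeval α gp
        = α ^ PN + (algebraMap K L π * α + algebraMap K L π) := by
      simp only [hgp, map_add, map_mul, map_pow, Polynomial.aeval_X, Polynomial.aeval_C]
    rw [h1, ← add_assoc]
    exact hroot
  -- span of powers of α
  have hspan : Submodule.span K (Set.range fun i : Fin PN => α ^ ((i : ℕ))) = ⊤ := by
    rw [eq_top_iff]
    rintro z -
    have hz : z ∈ Algebra.adjoin K {α} := by rw [hgen]; trivial
    rw [Algebra.adjoin_singleton_eq_range_aeval] at hz
    obtain ⟨Q, hQ⟩ := hz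
    have hmod : Polynomial.aeval α (Q %ₘ gp) = z := by
      have h2 := congrArg (Polynomial.aeval α) (Polynomial.modByMonic_add_div Q gp)
      rw [map_add, map_mul, hgproot, zero_mul, add_zero] at h2
      rw [h2]
      exact hQ
    have hdeg : (Q %ₘ gp).natDegree < PN := by
      rcases eq_or_ne (Q %ₘ gp) 0 with h0 | h0
      · rw [h0]
        simpa using Nat.pos_of_ne_zero hPN0
      · refine (Polynomial.natDegree_lt_iff_degree_lt h0).2 ?_
        rw [← hdgp]
        exact Polynomial.degree_modByMonic_lt Q hgmon
    rw [← hmod, Polynomial.aeval_eq_sum_range' hdeg]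
    apply Submodule.sum_mem
    intro i hi
    exact Submodule.smul_mem _ _
      (Submodule.subset_span ⟨⟨i, Finset.mem_range.1 hi⟩, rfl⟩)
  have hb : Module.Basis (Fin PN) K L := Module.Basis.mk (hli α hδ.symm) (by rw [hspan])
  haveI hFD : FiniteDimensional K L := Module.Finite.of_basis hb
  have hfinrank : Module.finrank K L = PN := by
    rw [Module.finrank_eq_card_basis hb, Fintype.card_fin]
  -- representation with integral coefficients
  have hmaster : ∀ w : L, vL w = δ → ∀ z : L, vL z ≤ 1 → ∃ a : Fin PN → K,
      (∀ i, vK (a i) ≤ 1) ∧ ∑ i, algebraMap K L (a i) * w ^ ((i : ℕ)) = z := by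
    intro w hw z hz
    haveI : Nonempty (Fin PN) := ⟨⟨0, by omega⟩⟩
    have hcard : Fintype.card (Fin PN) = Module.finrank K L := by
      rw [hfinrank, Fintype.card_fin]
    set bw := basisOfLinearIndependentOfCardEqFinrank (hli w hw) hcard with hbw
    set a : Fin PN → K := fun i => bw.repr z i with ha
    have hsum : ∑ i, algebraMap K L (a i) * w ^ ((i : ℕ)) = z := by
      conv_rhs => rw [← Module.Basis.sum_repr bw z]
      refine Finset.sum_congr rfl fun i _ => ?_
      rw [show bw i = w ^ ((i : ℕ)) from by
          rw [hbw, coe_basisOfLinearIndependentOfCardEqFinrank],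
        Algebra.smul_def]
    refine ⟨a, ?_, hsum⟩
    rcases eq_or_ne z 0 with rfl | hz0
    · intro i
      have h0 : a i = 0 := by rw [ha]; simp
      rw [h0]
      simp
    · have hex : ∃ i, a i ≠ 0 := by
        by_contra hcon
        push_neg at hcon
        apply hz0
        rw [← hsum]
        refine Finset.sum_eq_zero fun i _ => ?_
        rw [hcon i]
        simp
      obtain ⟨i₀, -, -, hveq, hmax⟩ := hsumval w hw a hex
      have h1 : vL (algebraMap K L (a i₀) * w ^ ((i₀ : ℕ))) ≤ 1 := by
        rw [← hveq, hsum]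
        exact hz
      intro i
      rcases eq_or_ne (a i) 0 with h0 | h0
      · rw [h0]
        simp
      · obtain ⟨m, hmv, hm⟩ := hterm w hw (a i) h0 (i : ℕ)
        have hle1 : δ ^ ((PN : ℤ) * m + ((i : ℕ) : ℤ)) ≤ 1 := by
          rw [← hm]
          exact le_trans (hmax i) h1
        have hexp : 0 ≤ (PN : ℤ) * m + ((i : ℕ) : ℤ) := by
          by_contra hneg
          push_neg at hneg
          have h2 := one_lt_zpow_of_neg₀ (zero_lt_iff.2 hδ0) hδ1 hneg
          exact absurd (lt_of_lt_of_le h2 hle1) (lt_irrefl _)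
        have hm0 : 0 ≤ m := by
          by_contra hneg
          push_neg at hneg
          have h2 : (PN : ℤ) * m ≤ (PN : ℤ) * (-1) :=
            mul_le_mul_of_nonneg_left (by omega) (by positivity)
          have h4 : ((i : ℕ) : ℤ) < (PN : ℤ) := by exact_mod_cast i.2
          omega
        rw [hmv]
        have h5 := zpow_le_zpow_right_of_le_one₀ (zero_lt_iff.2 hvπ0) hπ.1.le hm0
        simpa using h5
  -- uniformizer property of α
  have hunif : ∀ z : L, vL z < 1 → vL z ≤ δ := by
    intro z hz
    rcases eq_or_ne z 0 with rfl | hz0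
    · simp
    obtain ⟨a, -, hsum⟩ := hmaster α hδ.symm z hz.le
    have hex : ∃ i, a i ≠ 0 := by
      by_contra hcon
      push_neg at hcon
      apply hz0
      rw [← hsum]
      refine Finset.sum_eq_zero fun i _ => ?_
      rw [hcon i]
      simp
    obtain ⟨i₀, ha₀, -, hveq, -⟩ := hsumval α hδ.symm a hex
    obtain ⟨m, -, hm⟩ := hterm α hδ.symm (a i₀) ha₀ (i₀ : ℕ)
    have hvz : vL z = δ ^ ((PN : ℤ) * m + ((i₀ : ℕ) : ℤ)) := by
      rw [← hsum, hveq, hm]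
    have hlt : δ ^ ((PN : ℤ) * m + ((i₀ : ℕ) : ℤ)) < δ ^ (0 : ℤ) := by
      rw [zpow_zero, ← hvz]
      exact hz
    have hge1 : 1 ≤ (PN : ℤ) * m + ((i₀ : ℕ) : ℤ) := by
      have h6 := (zpow_lt_zpow_iff_right_of_lt_one₀ (zero_lt_iff.2 hδ0) hδ1).1 hlt
      omega
    calc vL z = δ ^ ((PN : ℤ) * m + ((i₀ : ℕ) : ℤ)) := hvz
      _ ≤ δ ^ (1 : ℤ) := zpow_le_zpow_right_of_le_one₀ (zero_lt_iff.2 hδ0) hδ1.le hge1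
      _ = δ := zpow_one δ
  -- part 3
  have hvPN : vK ((PN : K)) ≤ vK π := by
    have h1 : ((PN : K)) = (p : K) * (n : K) := by rw [hPN]; push_cast; ring
    rw [h1, Valuation.map_mul]
    calc vK ((p : K)) * vK ((n : K)) ≤ vK ((p : K)) * 1 := mul_le_mul_right (hnat n) _
      _ = vK ((p : K)) := mul_one _
      _ ≤ vK π := hπ.2 _ hvp1
  have hPNL : vL ((PN : L)) ≤ vK π := by
    rw [show ((PN : L)) = algebraMap K L ((PN : K)) from (map_natCast _ _).symm, hcomp]
    exact hvPN
  have hgoal3 : vL ((PN : ℕ) * α ^ (PN - 1) + algebraMap K L π) = vL (algebraMap K L π) := by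
    refine Valuation.map_add_eq_of_lt_right vL ?_
    calc vL ((PN : L) * α ^ (PN - 1)) = vL ((PN : L)) * δ ^ (PN - 1) := by
          rw [Valuation.map_mul, map_pow]
      _ ≤ vK π * δ ^ (PN - 1) := mul_le_mul_left hPNL _
      _ = δ ^ PN * δ ^ (PN - 1) := by rw [hδπ]
      _ = δ ^ (PN + (PN - 1)) := (pow_add δ PN (PN - 1)).symm
      _ < δ ^ PN := pow_lt_pow_anti hδ0 hδ1 (by omega)
      _ = vL (algebraMap K L π) := by rw [hδπ, hmπ]
  refine ⟨hfinrank, ⟨⟨hδ1, hunif⟩, by rw [hmπ, hδπ]⟩, hgoal3, ?_⟩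
  -- part 4
  rintro ⟨τ, ⟨hτ1, hτmax⟩, c, hc⟩
  have hτδ : vL τ = δ := le_antisymm (hunif τ hτ1) (hτmax α hδ1)
  have hcint : vK c ≤ 1 := by
    have h1 : vK c = δ ^ PN := by rw [← hcomp c, hc, map_pow, hτδ]
    rw [h1, hδπ]
    exact hπ.1.le
  have hα1 : vL α ≤ 1 := hδ1.le
  obtain ⟨af, hafint, hafsum⟩ := hmaster τ hτδ α hα1
  set f : K[X] := ∑ i : Fin PN, C (af i) * X ^ ((i : ℕ)) with hf
  have hfτ : Polynomial.aeval τ f = α := by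
    rw [hf, map_sum, ← hafsum]
    refine Finset.sum_congr rfl fun i _ => ?_
    rw [map_mul, Polynomial.aeval_C, map_pow, Polynomial.aeval_X]
  have hfint : ∀ i, vK (f.coeff i) ≤ 1 := by
    intro i
    rw [hf, Polynomial.finset_sum_coeff]
    refine vK.map_sum_le fun j _ => ?_
    rw [Polynomial.coeff_C_mul, Polynomial.coeff_X_pow]
    split_ifs with h
    · simpa using hafint j
    · simp
  obtain ⟨ae, haeint, haesum⟩ := hmaster α hδ.symm τ (by rw [hτδ]; exact hδ1.le)
  set ep : K[X] := ∑ i : Fin PN, C (ae i) * X ^ ((i : ℕ)) with hep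
  have heα : Polynomial.aeval α ep = τ := by
    rw [hep, map_sum, ← haesum]
    refine Finset.sum_congr rfl fun i _ => ?_
    rw [map_mul, Polynomial.aeval_C, map_pow, Polynomial.aeval_X]
  have heint : ∀ i, vK (ep.coeff i) ≤ 1 := by
    intro i
    rw [hep, Polynomial.finset_sum_coeff]
    refine vK.map_sum_le fun j _ => ?_
    rw [Polynomial.coeff_C_mul, Polynomial.coeff_X_pow]
    split_ifs with h
    · simpa using haeint j
    · simp
  have hgint : ∀ i, vK (gp.coeff i) ≤ 1 := by
    intro i
    rw [hgp]
    simp only [Polynomial.coeff_add]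
    refine le_trans (vK.map_add _ _) (max_le (int_pow vK (int_X vK) PN i) ?_)
    refine le_trans (vK.map_add _ _) (max_le ?_ (int_C vK hπ.1.le i))
    exact int_mul vK (int_C vK hπ.1.le) (int_X vK) i
  have hderg : Polynomial.derivative gp = C ((PN : K)) * X ^ (PN - 1) + C π := by
    rw [hgp, Polynomial.derivative_add, Polynomial.derivative_add,
      Polynomial.derivative_X_pow, Polynomial.derivative_C_mul_X,
      Polynomial.derivative_C, add_zero]
  have hg' : vL (Polynomial.aeval α (Polynomial.derivative gp)) = δ ^ PN := by
    have h1 : Polynomial.aeval α (Polynomial.derivative gp)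
        = ((PN : ℕ) : L) * α ^ (PN - 1) + algebraMap K L π := by
      rw [hderg, map_add, map_mul, Polynomial.aeval_C, map_pow, Polynomial.aeval_X,
        Polynomial.aeval_C, map_natCast]
    rw [h1, hgoal3, hmπ, ← hδπ]
  have hNv : vL ((PN : L)) ≤ δ ^ PN := by
    rw [hδπ]
    exact hPNL
  exact no_tau vK vL hcomp hnat PN hPN2 δ hδ0 hδ1 τ hτδ c hc hcint (hli τ hτδ)
    α gp f ep hgint hfint heint hfτ hgproot heα hg' hNv

end EisNGU



/-- Let `K` be a `p`-adic field with uniformizer `π` and `n ≥ 1`.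
Let `α` be a root of the Eisenstein polynomial `g(x) = x^{pn} + πx + π`, and let
`L = K[α]`.  Then `L/K` is totally ramified of degree `pn` (expressed by
`finrank K L = pn` together with `α` being a uniformizer of `L` whose `pn`-th
power has the valuation of `π`), `ord (g'(α)) = ord π`, and there is no
uniformizer `τ` of `L` with `τ^{pn} ∈ K`. -/
theorem eisenstein_no_good_uniformizer
    {K L : Type*} [Field K] [Field L] {Γ₀ : Type*} [LinearOrderedCommGroupWithZero Γ₀]
    (p : ℕ) [Fact p.Prime] [Algebra ℚ_[p] K] [FiniteDimensional ℚ_[p] K]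
    [Algebra K L]
    (vK : Valuation K Γ₀) (vL : Valuation L Γ₀)
    (hcomp : ∀ x : K, vL (algebraMap K L x) = vK x)
    (hpadic : ∀ x : ℚ_[p], vK (algebraMap ℚ_[p] K x) ≤ 1 ↔ ‖x‖ ≤ 1)
    (π : K) (hπ : vK π < 1 ∧ ∀ x : K, vK x < 1 → vK x ≤ vK π)
    (n : ℕ) (hn : 0 < n)
    (α : L) (hroot : α ^ (p * n) + algebraMap K L π * α + algebraMap K L π = 0)
    (hgen : Algebra.adjoin K {α} = ⊤) :
    -- `L = K[α]` has degree `pn` over `K` …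
    (Module.finrank K L = p * n) ∧
    -- … and is totally ramified: `α` is a uniformizer of `L` and
    -- `ord π = pn · ord α`
    ((vL α < 1 ∧ ∀ z : L, vL z < 1 → vL z ≤ vL α) ∧
      vL (algebraMap K L π) = (vL α) ^ (p * n)) ∧
    -- `ord (g'(α)) = ord π`, where `g'(x) = pn·x^{pn-1} + π`
    (vL ((p * n : ℕ) * α ^ (p * n - 1) + algebraMap K L π) = vL (algebraMap K L π)) ∧
    -- no uniformizer `τ` of `L` satisfies `τ^{pn} ∈ K`
    (¬ ∃ τ : L, (vL τ < 1 ∧ ∀ z : L, vL z < 1 → vL z ≤ vL τ) ∧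
        τ ^ (p * n) ∈ Set.range (algebraMap K L)) :=
  EisNGU.main p vK vL hcomp hpadic π hπ n hn α hroot hgen
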